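/- Let H be a monoid which is either a group, or whose set of non-units fails to be an almost-breakable subsemigroup of H (i.e. either some product of two non-units of H is a unit, or there exist non-units x, y with xy ∉ {x, y} and yx ∉ {x, y}). Then 𝒫fin,1(H) is UmF if and only if H is trivial or H has exactly two elements 1_H and u with u² = 1_H (i.e. H is isomorphic to the additive group of integers modulo 2). -/

import Mathlib

open scoped Pointwise

section Defs

variable {M : Type*} [Monoid M]

/-- `x` divides `y` (two-sidedly) in a monoid: `y = u * x * v` for some `u v`. -/
def dvdTS (x y : M) : Prop := ∃ u v : M, y = u * x * v

/-- A non-unit-divisor: an element that does not divide `1`. -/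
def isNonUnitDivisor (x : M) : Prop := ¬ dvdTS x 1

/-- `x` properly divides `y`: `x` divides `y` but `y` does not divide `x`. -/
def properDvdTS (x y : M) : Prop := dvdTS x y ∧ ¬ dvdTS y x

/-- An irreducible: a non-unit-divisor `a` with `a ≠ x * y` whenever `x, y` are
non-unit-divisors properly dividing `a`. -/
def isIrred (a : M) : Prop :=
  isNonUnitDivisor a ∧
    ∀ x y : M, isNonUnitDivisor x → isNonUnitDivisor y →
      properDvdTS x a → properDvdTS y a → a ≠ x * y

/-- An atom: a non-unit-divisor that is not a product of two non-unit-divisors. -/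
def isAtomTS (a : M) : Prop :=
  isNonUnitDivisor a ∧ ∀ x y : M, isNonUnitDivisor x → isNonUnitDivisor y → a ≠ x * y

/-- A quark: a non-unit-divisor not properly divided by any non-unit-divisor. -/
def isQuarkTS (a : M) : Prop :=
  isNonUnitDivisor a ∧ ∀ x : M, isNonUnitDivisor x → ¬ properDvdTS x a

/-- A factorization of `x` into irreducibles, recorded as a list. -/
def IsFactorization (l : List M) (x : M) : Prop :=
  (∀ a ∈ l, isIrred a) ∧ l.prod = x

/-- A minimal factorization: a factorization of `x` such that no product, in any order,
of a proper sub-multiset of its factors equals `x`. -/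
def IsMinimalFactorization (l : List M) (x : M) : Prop :=
  IsFactorization l x ∧
    ∀ l' : List M, (↑l' : Multiset M) < (↑l : Multiset M) → l'.prod ≠ x

end Defs

/-- A unique minimal factorization (UmF) monoid: every non-identity element has a minimal
factorization into irreducibles, unique up to permutation of the factors. -/
def IsUmF (M : Type*) [Monoid M] : Prop :=
  (∀ x : M, x ≠ 1 → ∃ l : List M, IsMinimalFactorization l x) ∧
    ∀ x : M, ∀ l l' : List M,
      IsMinimalFactorization l x → IsMinimalFactorization l' x → l.Perm l'

/-- The reduced finitary power monoid `𝒫fin,1(H)` of a monoid `H`: the submonoid of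
`Finset H` (under pointwise multiplication) of finite subsets containing `1`. -/
def redPow (H : Type*) [Monoid H] [DecidableEq H] : Submonoid (Finset H) where
  carrier := {X : Finset H | (1 : H) ∈ X}
  one_mem' := by simp
  mul_mem' := by
    intro X Y hX hY
    simpa using Finset.mul_mem_mul hX hY

section Aux
section Generic
variable {M : Type*} [Monoid M]
theorem nud_ne_one' {x : M} (h : isNonUnitDivisor x) : x ≠ 1 := by
  rintro rfl; exact h ⟨1, 1, by simp⟩
theorem dvdTS_self (x : M) : dvdTS x x := ⟨1, 1, by simp⟩
theorem minFac_pair {A B X : M} (hA : isIrred A) (hB : isIrred B) (h : A * B = X)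
    (hAX : A ≠ X) (hBX : B ≠ X) (hX1 : X ≠ 1) : IsMinimalFactorization [A, B] X := by
  refine ⟨⟨by intro a ha; simp at ha; rcases ha with rfl | rfl; exacts [hA, hB],
    by simpa using h⟩, ?_⟩
  intro l' hlt hprod
  have hcard : l'.length < 2 := by simpa using Multiset.card_lt_card hlt
  match l', hcard with
  | [], _ => simp at hprod; exact hX1 hprod.symm
  | [c], _ =>
    have hc : c ∈ (↑[A, B] : Multiset M) := Multiset.mem_of_le hlt.le (by simp)
    simp at hc hprod
    rcases hc with rfl | rfl
    exacts [hAX hprod, hBX hprod]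
theorem minFac_rep3 {A X : M} (hA : isIrred A) (h : A * A * A = X)
    (h1 : A ≠ X) (h2 : A * A ≠ X) (hX1 : X ≠ 1) :
    IsMinimalFactorization [A, A, A] X := by
  refine ⟨⟨by intro a ha; simp at ha; subst ha; exact hA, by simpa [mul_assoc] using h⟩, ?_⟩
  intro l' hlt hprod
  have hcard : l'.length < 3 := by simpa using Multiset.card_lt_card hlt
  have hmem : ∀ c ∈ l', c = A := by
    intro c hc
    have : c ∈ (↑[A, A, A] : Multiset M) := Multiset.mem_of_le hlt.le (by simpa using hc)
    simpa using this
  match l', hcard with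
  | [], _ => simp at hprod; exact hX1 hprod.symm
  | [c], _ => rw [hmem c (by simp)] at hprod; simp at hprod; exact h1 hprod
  | [c, d], _ =>
    rw [hmem c (by simp), hmem d (by simp)] at hprod; simp at hprod; exact h2 hprod
theorem not_umf {X : M} {l l' : List M} (h : IsMinimalFactorization l X)
    (h' : IsMinimalFactorization l' X) (hp : ¬ l.Perm l') : ¬ IsUmF M :=
  fun hu => hp (hu.2 X l l' h h')
end Generic

variable {H : Type*} [Monoid H] [DecidableEq H]

theorem mem_redPow {A : Finset H} : A ∈ redPow H ↔ (1 : H) ∈ A := Iff.rfl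
theorem redPow_coe_mul (X Y : redPow H) :
    ((X * Y : redPow H) : Finset H) = (X : Finset H) * Y := rfl
theorem redPow_coe_one : ((1 : redPow H) : Finset H) = {1} := rfl
theorem one_mem_val (X : redPow H) : (1 : H) ∈ (X : Finset H) := X.2
theorem subset_mul_left (A B : Finset H) (hB : (1:H) ∈ B) : A ⊆ A * B := by
  intro a ha; simpa using Finset.mul_mem_mul ha hB
theorem subset_mul_right (A B : Finset H) (hA : (1:H) ∈ A) : B ⊆ A * B := by
  intro b hb; simpa using Finset.mul_mem_mul hA hb
theorem subset_of_dvdTS {X Y : redPow H} (h : dvdTS Y X) : (Y : Finset H) ⊆ (X : Finset H) := by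
  obtain ⟨U, V, rfl⟩ := h
  calc (Y : Finset H) ⊆ (U : Finset H) * Y := subset_mul_right _ _ (one_mem_val U)
    _ ⊆ (U : Finset H) * Y * V := subset_mul_left _ _ (one_mem_val V)
theorem nud_iff_ne_one {X : redPow H} : isNonUnitDivisor X ↔ X ≠ 1 := by
  constructor
  · rintro h rfl; exact h ⟨1, 1, by simp⟩
  · rintro h hd
    refine h (Subtype.ext (Finset.Subset.antisymm ?_ ?_))
    · simpa [redPow_coe_one] using subset_of_dvdTS hd
    · intro a ha
      simp only [redPow_coe_one, Finset.mem_singleton] at ha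
      subst ha; exact one_mem_val X
theorem subset_pair_classify {Y : Finset H} {u : H} (h1 : (1:H) ∈ Y) (hsub : Y ⊆ {1, u}) :
    Y = {1} ∨ Y = ({1, u} : Finset H) := by
  by_cases hu : u ∈ Y
  · right
    apply Finset.Subset.antisymm hsub
    intro a ha
    simp only [Finset.mem_insert, Finset.mem_singleton] at ha
    rcases ha with rfl | rfl <;> assumption
  · left
    apply Finset.Subset.antisymm
    · intro a ha
      rcases Finset.mem_insert.mp (hsub ha) with rfl | h
      · simp
      · simp only [Finset.mem_singleton] at h; subst h; exact absurd ha hu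
    · simpa using h1
theorem pair_irred {u : H} (hu : u ≠ 1) : isIrred (⟨{1, u}, by simp [mem_redPow]⟩ : redPow H) := by
  constructor
  · rw [nud_iff_ne_one]
    intro h
    have hv : ({1, u} : Finset H) = {1} := congrArg (fun X : redPow H => (X : Finset H)) h
    have : u ∈ ({1} : Finset H) := hv ▸ (by simp : u ∈ ({1,u} : Finset H))
    simp at this; exact hu this
  · intro Y Z hY hZ hpY hpZ heq
    have hYsub := subset_of_dvdTS hpY.1
    rcases subset_pair_classify (one_mem_val Y) hYsub with hY1 | hYp
    · exact (nud_iff_ne_one.mp hY) (Subtype.ext (hY1.trans redPow_coe_one.symm))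
    · have hYe : Y = (⟨{1, u}, by simp [mem_redPow]⟩ : redPow H) := Subtype.ext hYp
      subst hYe
      exact hpY.2 (dvdTS_self _)
theorem pair_mul_pair (a b : H) : ({1,a} : Finset H) * ({1,b}) = {1, a, b, a*b} := by
  ext z
  simp only [Finset.mem_mul, Finset.mem_insert, Finset.mem_singleton]
  constructor
  · rintro ⟨u, (rfl|rfl), v, (rfl|rfl), rfl⟩ <;> simp
  · rintro (rfl|rfl|rfl|rfl)
    exacts [⟨1, Or.inl rfl, 1, Or.inl rfl, by simp⟩, ⟨z, Or.inr rfl, 1, Or.inl rfl, by simp⟩,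
      ⟨1, Or.inl rfl, z, Or.inr rfl, by simp⟩, ⟨a, Or.inr rfl, b, Or.inr rfl, rfl⟩]
theorem triple_mul_pair (a b c : H) :
    ({1,a,b} : Finset H) * ({1,c}) = {1, a, b, c, a*c, b*c} := by
  ext z
  simp only [Finset.mem_mul, Finset.mem_insert, Finset.mem_singleton]
  constructor
  · rintro ⟨u, (rfl|rfl|rfl), v, (rfl|rfl), rfl⟩ <;> simp
  · rintro (rfl|rfl|rfl|rfl|rfl|rfl)
    exacts [⟨1, Or.inl rfl, 1, Or.inl rfl, by simp⟩,
      ⟨z, Or.inr (Or.inl rfl), 1, Or.inl rfl, by simp⟩,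
      ⟨z, Or.inr (Or.inr rfl), 1, Or.inl rfl, by simp⟩,
      ⟨1, Or.inl rfl, z, Or.inr rfl, by simp⟩,
      ⟨a, Or.inr (Or.inl rfl), c, Or.inr rfl, rfl⟩,
      ⟨b, Or.inr (Or.inr rfl), c, Or.inr rfl, rfl⟩]

/-- counterexample whenever some `x` has `x² ∉ {1, x}`. -/
theorem notUmF_of_sq (x : H) (h1 : x*x ≠ 1) (h2 : x*x ≠ x) : ¬ IsUmF (redPow H) := by
  have hx1 : x ≠ 1 := fun h => h2 (by rw [h, one_mul])
  set A : redPow H := ⟨{1, x}, by simp [mem_redPow]⟩ with hAdef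
  set B : redPow H := ⟨{1, x*x}, by simp [mem_redPow]⟩ with hBdef
  have hA : isIrred A := pair_irred hx1
  have hB : isIrred B := pair_irred h1
  have hABne : A ≠ B := by
    intro h
    have hv : ({1, x} : Finset H) = {1, x*x} := congrArg (fun X : redPow H => (X : Finset H)) h
    have : x ∈ ({1, x*x} : Finset H) := hv ▸ (by simp : x ∈ ({1,x} : Finset H))
    simp at this
    rcases this with h | h
    exacts [hx1 h, h2 h.symm]
  by_cases h3 : x*x*x = 1 ∨ x*x*x = x ∨ x*x*x = x*x
  · set X : redPow H := ⟨{1, x, x*x}, by simp [mem_redPow]⟩ with hXdef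
    have e1 : A * A = X := by
      apply Subtype.ext
      rw [redPow_coe_mul]
      show ({1,x} : Finset H) * {1,x} = {1,x,x*x}
      rw [pair_mul_pair]
      ext z; simp
    have e2 : A * B = X := by
      apply Subtype.ext
      rw [redPow_coe_mul]
      show ({1,x} : Finset H) * {1,x*x} = {1,x,x*x}
      rw [pair_mul_pair, ← mul_assoc]
      rcases h3 with h3 | h3 | h3 <;> rw [h3] <;> (ext z; simp; try tauto)
    have hAX : A ≠ X := by
      intro h
      have hv : ({1, x} : Finset H) = {1, x, x*x} :=
        congrArg (fun X : redPow H => (X : Finset H)) h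
      have : x*x ∈ ({1, x} : Finset H) := hv ▸ (by simp : x*x ∈ ({1,x,x*x} : Finset H))
      simp at this; tauto
    have hBX : B ≠ X := by
      intro h
      have hv : ({1, x*x} : Finset H) = {1, x, x*x} :=
        congrArg (fun X : redPow H => (X : Finset H)) h
      have : x ∈ ({1, x*x} : Finset H) := hv ▸ (by simp : x ∈ ({1,x,x*x} : Finset H))
      simp at this
      rcases this with h | h
      exacts [hx1 h, h2 h.symm]
    have hX1 : X ≠ 1 := by
      intro h
      have hv : ({1, x, x*x} : Finset H) = {1} :=
        (congrArg (fun X : redPow H => (X : Finset H)) h).trans redPow_coe_one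
      have : x ∈ ({1} : Finset H) := hv ▸ (by simp : x ∈ ({1,x,x*x} : Finset H))
      simp at this; exact hx1 this
    refine not_umf (minFac_pair hA hA e1 hAX hAX hX1) (minFac_pair hA hB e2 hAX hBX hX1) ?_
    intro hperm
    have : B ∈ [A, A] := hperm.mem_iff.mpr (by simp)
    simp at this
    exact hABne this.symm
  · push_neg at h3
    obtain ⟨h31, h32, h33⟩ := h3
    set X : redPow H := ⟨{1, x, x*x, x*x*x}, by simp [mem_redPow]⟩ with hXdef
    have e1 : A * A * A = X := by
      have eAA : ((A * A : redPow H) : Finset H) = {1, x, x*x} := by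
        rw [redPow_coe_mul]
        show ({1,x} : Finset H) * {1,x} = {1,x,x*x}
        rw [pair_mul_pair]; ext z; simp
      apply Subtype.ext
      rw [redPow_coe_mul, eAA]
      show ({1,x,x*x} : Finset H) * {1,x} = {1,x,x*x,x*x*x}
      rw [triple_mul_pair]
      ext z; simp [mul_assoc]
    have e2 : A * B = X := by
      apply Subtype.ext
      rw [redPow_coe_mul]
      show ({1,x} : Finset H) * {1,x*x} = {1,x,x*x,x*x*x}
      rw [pair_mul_pair, mul_assoc]
      
    have hAX : A ≠ X := by
      intro h
      have hv : ({1, x} : Finset H) = {1, x, x*x, x*x*x} :=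
        congrArg (fun X : redPow H => (X : Finset H)) h
      have : x*x ∈ ({1, x} : Finset H) := hv ▸ (by simp : x*x ∈ ({1,x,x*x,x*x*x} : Finset H))
      simp at this; tauto
    have hAAX : A * A ≠ X := by
      intro h
      have hv : ((A * A : redPow H) : Finset H) = {1, x, x*x, x*x*x} :=
        congrArg (fun X : redPow H => (X : Finset H)) h
      rw [redPow_coe_mul] at hv
      have hv2 : ({1,x} : Finset H) * {1,x} = {1, x, x*x, x*x*x} := hv
      rw [pair_mul_pair] at hv2
      have : x*x*x ∈ ({1, x, x, x*x} : Finset H) :=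
        hv2 ▸ (by simp : x*x*x ∈ ({1,x,x*x,x*x*x} : Finset H))
      simp at this; try tauto
    have hBX : B ≠ X := by
      intro h
      have hv : ({1, x*x} : Finset H) = {1, x, x*x, x*x*x} :=
        congrArg (fun X : redPow H => (X : Finset H)) h
      have : x ∈ ({1, x*x} : Finset H) := hv ▸ (by simp : x ∈ ({1,x,x*x,x*x*x} : Finset H))
      simp at this
      try (rcases this with h | h; exacts [hx1 h, h2 h.symm])
    have hX1 : X ≠ 1 := by
      intro h
      have hv : ({1, x, x*x, x*x*x} : Finset H) = {1} :=
        (congrArg (fun X : redPow H => (X : Finset H)) h).trans redPow_coe_one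
      have : x ∈ ({1} : Finset H) := hv ▸ (by simp : x ∈ ({1,x,x*x,x*x*x} : Finset H))
      simp at this; exact hx1 this
    refine not_umf (minFac_rep3 hA e1 hAX hAAX hX1) (minFac_pair hA hB e2 hAX hBX hX1) ?_
    intro hperm
    have := hperm.length_eq
    simp at this

theorem redPow_val_ne {A B : Finset H} {hA hB} (h : ∃ z : H, z ∈ B ∧ z ∉ A) :
    (⟨A, hA⟩ : redPow H) ≠ ⟨B, hB⟩ := by
  intro he
  obtain ⟨z, hzB, hzA⟩ := h
  have hv : A = B := congrArg (fun X : redPow H => (X : Finset H)) he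
  exact hzA (hv ▸ hzB)

theorem notUmF_klein (a b : H) (ha1 : a ≠ 1) (hb1 : b ≠ 1) (hab : a ≠ b)
    (ha2 : a*a = 1) (hb2 : b*b = 1) (hcomm : a*b = b*a) (hab1 : a*b ≠ 1) :
    ¬ IsUmF (redPow H) := by
  have habna : a*b ≠ a := by
    intro h
    have h' := congrArg (fun t => a * t) h
    simp only [← mul_assoc, ha2, one_mul] at h'
    exact hb1 h'
  have habnb : a*b ≠ b := by
    intro h
    have h' := congrArg (fun t => t * b) h
    simp only [mul_assoc, hb2, mul_one] at h'
    exact ha1 h'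
  set Pa : redPow H := ⟨{1, a}, by simp [mem_redPow]⟩
  set Pb : redPow H := ⟨{1, b}, by simp [mem_redPow]⟩
  set Pab : redPow H := ⟨{1, a*b}, by simp [mem_redPow]⟩
  set X : redPow H := ⟨{1, a, b, a*b}, by simp [mem_redPow]⟩
  have e1 : Pa * Pb = X := by
    apply Subtype.ext
    rw [redPow_coe_mul]
    show ({1,a} : Finset H) * {1,b} = {1,a,b,a*b}
    rw [pair_mul_pair]
  have hbab : b*(a*b) = a := by rw [hcomm, ← mul_assoc, hb2, one_mul]
  have e2 : Pb * Pab = X := by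
    apply Subtype.ext
    rw [redPow_coe_mul]
    show ({1,b} : Finset H) * {1,a*b} = {1,a,b,a*b}
    rw [pair_mul_pair, hbab]
    ext z; simp; tauto
  have hPaX : Pa ≠ X := redPow_val_ne ⟨b, by simp, by simp [hb1, Ne.symm hab]⟩
  have hPbX : Pb ≠ X := redPow_val_ne ⟨a, by simp, by simp [ha1, hab]⟩
  have haab : a ≠ a*b := by
    intro h
    have h' := congrArg (fun t => a * t) h
    simp only [← mul_assoc, ha2, one_mul] at h'
    exact hb1 h'.symm
  have hPabX : Pab ≠ X := redPow_val_ne ⟨a, by simp, by simp [ha1, haab]⟩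
  have hX1 : X ≠ 1 := by
    intro h
    have hv : ({1, a, b, a*b} : Finset H) = {1} :=
      (congrArg (fun X : redPow H => (X : Finset H)) h).trans redPow_coe_one
    have : a ∈ ({1} : Finset H) := hv ▸ (by simp : a ∈ ({1,a,b,a*b} : Finset H))
    simp at this; exact ha1 this
  refine not_umf (minFac_pair (pair_irred ha1) (pair_irred hb1) e1 hPaX hPbX hX1)
    (minFac_pair (pair_irred hb1) (pair_irred hab1) e2 hPbX hPabX hX1) ?_
  intro hperm
  have : Pa ∈ [Pb, Pab] := hperm.mem_iff.mp List.mem_cons_self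
  simp at this
  rcases this with h | h
  · exact (redPow_val_ne ⟨a, by simp, by simp [ha1, hab]⟩ : Pb ≠ Pa) h.symm
  · exact (redPow_val_ne ⟨a*b, by simp, by simp [hab1, habna]⟩ : Pa ≠ Pab) h

theorem subset_triple_classify {Y : Finset H} {u v : H} (h1 : (1:H) ∈ Y)
    (hsub : Y ⊆ {1, u, v}) :
    Y = {1} ∨ Y = ({1, u} : Finset H) ∨ Y = ({1, v} : Finset H) ∨ Y = ({1, u, v} : Finset H) := by
  by_cases hu : u ∈ Y <;> by_cases hv : v ∈ Y
  · right; right; right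
    apply Finset.Subset.antisymm hsub
    intro z hz; simp at hz; rcases hz with rfl | rfl | rfl <;> assumption
  · right; left
    apply Finset.Subset.antisymm
    · intro z hz
      have := hsub hz; simp at this ⊢
      rcases this with rfl | rfl | rfl
      · left; rfl
      · right; rfl
      · exact absurd hz hv
    · intro z hz; simp at hz; rcases hz with rfl | rfl <;> assumption
  · right; right; left
    apply Finset.Subset.antisymm
    · intro z hz
      have := hsub hz; simp at this ⊢
      rcases this with rfl | rfl | rfl
      · left; rfl
      · exact absurd hz hu
      · right; rfl
    · intro z hz; simp at hz; rcases hz with rfl | rfl <;> assumption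
  · left
    apply Finset.Subset.antisymm
    · intro z hz
      have := hsub hz; simp at this ⊢
      rcases this with rfl | rfl | rfl
      · rfl
      · exact absurd hz hu
      · exact absurd hz hv
    · intro z hz; simp at hz; subst hz; assumption

theorem notUmF_idem (x y : H) (hx2 : x*x = x) (hy2 : y*y = y)
    (hxy1 : x*y ≠ 1) (hxyx : x*y ≠ x) (hxyy : x*y ≠ y)
    (hyx1 : y*x ≠ 1) (hyxx : y*x ≠ x) (hyxy : y*x ≠ y) : ¬ IsUmF (redPow H) := by
  have hx1 : x ≠ 1 := fun h => hxyy (by rw [h, one_mul])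
  have hy1 : y ≠ 1 := fun h => hxyx (by rw [h, mul_one])
  have hxyne : x ≠ y := fun h => hxyy (by rw [h, hy2])
  set Pa : redPow H := ⟨{1, x}, by simp [mem_redPow]⟩ with hPa
  set Pb : redPow H := ⟨{1, y}, by simp [mem_redPow]⟩ with hPb
  set T : redPow H := ⟨{1, x, y}, by simp [mem_redPow]⟩ with hT
  set X : redPow H := ⟨{1, x, y, x*y}, by simp [mem_redPow]⟩ with hX
  have hTirr : isIrred T := by
    constructor
    · rw [nud_iff_ne_one]
      exact Ne.symm (redPow_val_ne ⟨x, by simp, by simp [hx1]⟩)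
    · intro Y Z hY hZ hpY hpZ heq
      have hYsub : (Y : Finset H) ⊆ {1, x, y} := subset_of_dvdTS hpY.1
      have hZsub : (Z : Finset H) ⊆ {1, x, y} := subset_of_dvdTS hpZ.1
      have hone : ∀ W : redPow H, isNonUnitDivisor W → (W : Finset H) ≠ {1} := by
        intro W hW h
        exact (nud_iff_ne_one.mp hW) (Subtype.ext (h.trans redPow_coe_one.symm))
      have htop : ∀ W : redPow H, properDvdTS W T → (W : Finset H) ≠ ({1,x,y} : Finset H) := by
        intro W hp h
        have hWe : W = T := Subtype.ext h
        subst hWe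
        exact hp.2 (dvdTS_self _)
      have hv : ({1,x,y} : Finset H) = (Y : Finset H) * (Z : Finset H) :=
        congrArg (fun W : redPow H => (W : Finset H)) heq
      rcases subset_triple_classify (one_mem_val Y) hYsub with h | hYv | hYv | h
      · exact hone Y hY h
      · rcases subset_triple_classify (one_mem_val Z) hZsub with h | hZv | hZv | h
        · exact hone Z hZ h
        · rw [hYv, hZv, pair_mul_pair, hx2] at hv
          have : y ∈ ({1,x,x,x} : Finset H) := hv ▸ (by simp : y ∈ ({1,x,y} : Finset H))
          simp at this
          rcases this with h | h
          exacts [hy1 h, hxyne h.symm]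
        · rw [hYv, hZv, pair_mul_pair] at hv
          have : x*y ∈ ({1,x,y} : Finset H) := hv.symm ▸ (by simp : x*y ∈ ({1,x,y,x*y} : Finset H))
          simp at this
          tauto
        · exact htop Z hpZ h
      · rcases subset_triple_classify (one_mem_val Z) hZsub with h | hZv | hZv | h
        · exact hone Z hZ h
        · rw [hYv, hZv, pair_mul_pair] at hv
          have : y*x ∈ ({1,x,y} : Finset H) := hv.symm ▸ (by simp : y*x ∈ ({1,y,x,y*x} : Finset H))
          simp at this
          tauto
        · rw [hYv, hZv, pair_mul_pair, hy2] at hv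
          have : x ∈ ({1,y,y,y} : Finset H) := hv ▸ (by simp : x ∈ ({1,x,y} : Finset H))
          simp at this
          rcases this with h | h
          exacts [hx1 h, hxyne h]
        · exact htop Z hpZ h
      · exact htop Y hpY h
  have e1 : Pa * Pb = X := by
    apply Subtype.ext
    rw [redPow_coe_mul]
    show ({1,x} : Finset H) * {1,y} = {1,x,y,x*y}
    rw [pair_mul_pair]
  have e2 : T * Pb = X := by
    apply Subtype.ext
    rw [redPow_coe_mul]
    show ({1,x,y} : Finset H) * {1,y} = {1,x,y,x*y}
    rw [triple_mul_pair, hy2]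
    ext z; simp; tauto
  have hPaX : Pa ≠ X := redPow_val_ne ⟨y, by simp, by simp [hy1, Ne.symm hxyne]⟩
  have hPbX : Pb ≠ X := redPow_val_ne ⟨x, by simp, by simp [hx1, hxyne]⟩
  have hTX : T ≠ X := redPow_val_ne ⟨x*y, by simp, by simp [hxy1, hxyx, hxyy]⟩
  have hX1 : X ≠ 1 := Ne.symm (redPow_val_ne ⟨x, by simp, by simp [hx1]⟩)
  refine not_umf (minFac_pair (pair_irred hx1) (pair_irred hy1) e1 hPaX hPbX hX1)
    (minFac_pair hTirr (pair_irred hy1) e2 hTX hPbX hX1) ?_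
  intro hperm
  have : T ∈ [Pa, Pb] := hperm.mem_iff.mpr List.mem_cons_self
  simp at this
  rcases this with h | h
  · exact (redPow_val_ne ⟨y, by simp, by simp [hy1, Ne.symm hxyne]⟩ : Pa ≠ T) h.symm
  · exact (redPow_val_ne ⟨x, by simp, by simp [hx1, hxyne]⟩ : Pb ≠ T) h.symm

theorem umf_trivial (h : ∀ z : H, z = 1) : IsUmF (redPow H) := by
  have hall : ∀ X : redPow H, X = 1 := by
    intro X
    apply Subtype.ext
    apply Finset.Subset.antisymm
    · intro a ha
      rw [h a] at ha ⊢
      simpa [redPow_coe_one] using ha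
    · intro a ha
      simp only [redPow_coe_one, Finset.mem_singleton] at ha
      subst ha; exact one_mem_val X
  constructor
  · intro x hx; exact absurd (hall x) hx
  · intro x l l' hl hl'
    have key : ∀ m : List (redPow H), IsMinimalFactorization m x → m = [] := by
      intro m hm
      rcases m with _ | ⟨a, t⟩
      · rfl
      · have := hm.1.1 a (by simp)
        exact absurd (hall a) (nud_ne_one' this.1)
    rw [key l hl, key l' hl']

theorem umf_two (u : H) (hu1 : u ≠ 1) (hu2 : u * u = 1) (hcl : ∀ z : H, z = 1 ∨ z = u) :
    IsUmF (redPow H) := by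
  set U : redPow H := ⟨{1, u}, by simp [mem_redPow]⟩ with hUdef
  have hU1 : U ≠ 1 := Ne.symm (redPow_val_ne ⟨u, by simp, by simp [hu1]⟩)
  have hUU : U * U = U := by
    apply Subtype.ext
    rw [redPow_coe_mul]
    show ({1,u} : Finset H) * {1,u} = {1,u}
    rw [pair_mul_pair, hu2]
    ext z; simp; tauto
  have hclass : ∀ X : redPow H, X = 1 ∨ X = U := by
    intro X
    have hsub : (X : Finset H) ⊆ {1, u} := by
      intro a _
      rcases hcl a with rfl | rfl <;> simp
    rcases subset_pair_classify (one_mem_val X) hsub with h | h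
    · exact Or.inl (Subtype.ext (h.trans redPow_coe_one.symm))
    · exact Or.inr (Subtype.ext h)
  have hprodU : ∀ m : List (redPow H), (∀ a ∈ m, a = U) → m ≠ [] → m.prod = U := by
    intro m
    induction m with
    | nil => intro _ h; exact absurd rfl h
    | cons a t ih =>
      intro hmem _
      rcases eq_or_ne t [] with rfl | ht
      · simp [hmem a (by simp)]
      · rw [List.prod_cons, hmem a (by simp), ih (fun b hb => hmem b (by simp [hb])) ht, hUU]
  have key : ∀ (xx : redPow H) (m : List (redPow H)), IsMinimalFactorization m xx →
      (xx = 1 ∧ m = []) ∨ (xx = U ∧ m = [U]) := by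
    intro xx m hm
    have hmemU : ∀ a ∈ m, a = U := by
      intro a ha
      have hirr := hm.1.1 a ha
      rcases hclass a with h | h
      · exact absurd h (nud_ne_one' hirr.1)
      · exact h
    rcases m with _ | ⟨a, t⟩
    · left; exact ⟨by simpa using hm.1.2.symm, rfl⟩
    · right
      have ha : a = U := hmemU a (by simp)
      rcases eq_or_ne t [] with rfl | ht
      · subst ha
        refine ⟨by simpa using hm.1.2.symm, rfl⟩
      · exfalso
        have hxx : (a :: t).prod = xx := hm.1.2
        rw [hprodU (a :: t) hmemU (by simp)] at hxx
        have hlt : (↑[U] : Multiset (redPow H)) < (↑(a :: t) : Multiset (redPow H)) := by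
          apply lt_of_le_of_ne
          · refine Multiset.singleton_le.mpr ?_
            show U ∈ (↑(a :: t) : Multiset (redPow H))
            simp [ha]
          · intro h
            have := congrArg Multiset.card h
            simp at this
            rcases t with _ | ⟨b, t'⟩
            · exact ht rfl
            · simp at this
        exact hm.2 [U] hlt (by simpa using hxx)
  constructor
  · intro x hx
    rcases hclass x with h | h
    · exact absurd h hx
    · subst h
      refine ⟨[U], ⟨⟨by intro a ha; simp at ha; subst ha; exact pair_irred hu1, by simp⟩, ?_⟩⟩
      intro l' hlt hprod
      have hcard : l'.length < 1 := by simpa using Multiset.card_lt_card hlt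
      match l', hcard with
      | [], _ => simp at hprod; exact hU1 hprod.symm
  · intro x l l' hl hl'
    rcases key x l hl with ⟨h1, h2⟩ | ⟨h1, h2⟩ <;> rcases key x l' hl' with ⟨h1', h2'⟩ | ⟨h1', h2'⟩
    · rw [h2, h2']
    · exact absurd (h1 ▸ h1') hU1.symm
    · exact absurd (h1' ▸ h1) hU1.symm
    · rw [h2, h2']

end Aux

theorem stmt_11 {H : Type*} [Monoid H] [DecidableEq H]
    (hH : (∀ x : H, IsUnit x) ∨
      (∃ x y : H, ¬ IsUnit x ∧ ¬ IsUnit y ∧ IsUnit (x * y)) ∨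
      (∃ x y : H, ¬ IsUnit x ∧ ¬ IsUnit y ∧
        (x * y ≠ x ∧ x * y ≠ y) ∧ (y * x ≠ x ∧ y * x ≠ y))) :
    IsUmF (redPow H) ↔
      (∀ x : H, x = 1) ∨ ∃ u : H, u ≠ 1 ∧ u ^ 2 = 1 ∧ ∀ x : H, x = 1 ∨ x = u := by
  constructor
  · intro humf
    by_contra hR
    push_neg at hR
    obtain ⟨hnt, hnu⟩ := hR
    by_cases hsq : ∃ z : H, z * z ≠ 1 ∧ z * z ≠ z
    · obtain ⟨z, h1, h2⟩ := hsq
      exact notUmF_of_sq z h1 h2 humf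
    · push_neg at hsq
      rcases hH with hG | ⟨x, y, hx, hy, hxyu⟩ | ⟨x, y, hx, hy, ⟨hxyx, hxyy⟩, hyxx, hyxy⟩
      · have hsq1 : ∀ z : H, z * z = 1 := by
          intro z
          by_contra hne
          have hzz := hsq z hne
          obtain ⟨uz, hz⟩ := hG z
          have h' := congrArg (fun t => (↑uz⁻¹ : H) * t) hzz
          simp only [← hz, ← mul_assoc, uz.inv_mul, one_mul] at h'
          exact hne (by rw [← hz, h', one_mul])
        obtain ⟨a, ha1⟩ := hnt
        obtain ⟨b, hb1, hba⟩ := hnu a ha1 (by rw [pow_two]; exact hsq1 a)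
        have hab1 : a * b ≠ 1 := by
          intro h
          apply hba
          have h' := congrArg (fun t => a * t) h
          simp only [← mul_assoc, hsq1 a, one_mul, mul_one] at h'
          exact h'
        have hcomm : a * b = b * a := by
          have h5 : a * ((a*b) * (a*b)) * b = a * b := by rw [hsq1 (a*b)]; simp
          have h6 : a * ((a*b) * (a*b)) * b = b * a := by
            have e : a * ((a*b) * (a*b)) * b = a*a * (b*(a*(b*b))) := by
              simp only [mul_assoc]
            rw [e, hsq1 a, hsq1 b, one_mul, mul_one]
          exact h5.symm.trans h6
        exact notUmF_klein a b ha1 hb1 (Ne.symm hba) (hsq1 a) (hsq1 b) hcomm hab1 humf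
      · exfalso
        have hx2 : x * x ≠ 1 := fun h => hx ⟨⟨x, x, h, h⟩, rfl⟩
        have hxx := hsq x hx2
        have hw : (x * y) * (↑hxyu.unit⁻¹ : H) = 1 := by
          exact hxyu.mul_val_inv
        have hx1 : x = 1 := by
          calc x = x * 1 := (mul_one x).symm
          _ = x * ((x*y) * (↑hxyu.unit⁻¹ : H)) := by rw [hw]
          _ = (x*x) * (y * (↑hxyu.unit⁻¹ : H)) := by simp only [mul_assoc]
          _ = x * (y * (↑hxyu.unit⁻¹ : H)) := by rw [hxx]
          _ = (x*y) * (↑hxyu.unit⁻¹ : H) := by rw [mul_assoc]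
          _ = 1 := hw
        exact hx (hx1 ▸ isUnit_one)
      · have hx2 : x * x ≠ 1 := fun h => hx ⟨⟨x, x, h, h⟩, rfl⟩
        have hxx := hsq x hx2
        have hy2 : y * y ≠ 1 := fun h => hy ⟨⟨y, y, h, h⟩, rfl⟩
        have hyy := hsq y hy2
        have hxy1 : x * y ≠ 1 := by
          intro h
          have hx1 : x = 1 := by
            calc x = x * 1 := (mul_one x).symm
            _ = x * (x * y) := by rw [h]
            _ = (x*x) * y := by rw [mul_assoc]
            _ = x * y := by rw [hxx]
            _ = 1 := h
          exact hx (hx1 ▸ isUnit_one)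
        have hyx1 : y * x ≠ 1 := by
          intro h
          have hy1 : y = 1 := by
            calc y = y * 1 := (mul_one y).symm
            _ = y * (y * x) := by rw [h]
            _ = (y*y) * x := by rw [mul_assoc]
            _ = y * x := by rw [hyy]
            _ = 1 := h
          exact hy (hy1 ▸ isUnit_one)
        exact notUmF_idem x y hxx hyy hxy1 hxyx hxyy hyx1 hyxx hyxy humf
  · rintro (h | ⟨u, h1, h2, h3⟩)
    · exact umf_trivial h
    · exact umf_two u h1 (by rw [← pow_two]; exact h2) h3
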